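/- Let P_k(x) = k ∫_0^1 y^{k-1}/(1−xy)^k dy and Q_k(x) = k ∫_0^1 y^{k-1} |log(1−xy)|/(1−xy)^k dy for x ∈ [0,1), k ≥ 1. Then Q_k(x) P_{k+1}(x) − Q_{k+1}(x) P_k(x) < 0 for all x ∈ (0,1); equivalently the ratio Q_k/P_k is strictly increasing in k. -/

import Mathlib

open intervalIntegral

section QPaux

open intervalIntegral MeasureTheory Set

namespace QPratioAux

noncomputable def fw (k : ℕ) (x y : ℝ) : ℝ := y ^ (k - 1) / (1 - x * y) ^ k
noncomputable def Lw (x y : ℝ) : ℝ := -Real.log (1 - x * y)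
noncomputable def hw (x y : ℝ) : ℝ := y / (1 - x * y)

variable {x : ℝ}

lemma denom_pos (hx0 : 0 < x) (hx1 : x < 1) {y : ℝ} (hy : y ∈ Icc (0:ℝ) 1) :
    0 < 1 - x * y := by nlinarith [hy.1, hy.2]

lemma fw_cont (hx0 : 0 < x) (hx1 : x < 1) (k : ℕ) :
    ContinuousOn (fw k x) (Icc 0 1) := by
  apply ContinuousOn.div (by fun_prop) (by fun_prop)
  exact fun y hy => pow_ne_zero _ (denom_pos hx0 hx1 hy).ne'

lemma Lw_cont (hx0 : 0 < x) (hx1 : x < 1) :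
    ContinuousOn (Lw x) (Icc 0 1) := by
  apply ContinuousOn.neg
  exact ContinuousOn.log (by fun_prop) (fun y hy => (denom_pos hx0 hx1 hy).ne')

lemma hw_cont (hx0 : 0 < x) (hx1 : x < 1) :
    ContinuousOn (hw x) (Icc 0 1) := by
  apply ContinuousOn.div (by fun_prop) (by fun_prop)
  exact fun y hy => (denom_pos hx0 hx1 hy).ne'

lemma integ_of_cont {g : ℝ → ℝ}
    (hg : ContinuousOn g (Icc 0 1)) {a b : ℝ} (ha : a ∈ Icc (0:ℝ) 1)
    (hb : b ∈ Icc (0:ℝ) 1) : IntervalIntegrable g volume a b := by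
  apply ContinuousOn.intervalIntegrable
  exact hg.mono (Set.uIcc_subset_Icc ha hb)

lemma fw_nonneg (hx0 : 0 < x) (hx1 : x < 1) (k : ℕ) {y : ℝ} (hy : y ∈ Icc (0:ℝ) 1) :
    0 ≤ fw k x y :=
  div_nonneg (pow_nonneg hy.1 _) (pow_nonneg (denom_pos hx0 hx1 hy).le _)

lemma fw_pos (hx0 : 0 < x) (hx1 : x < 1) (k : ℕ) {y : ℝ} (hy : y ∈ Ioo (0:ℝ) 1) :
    0 < fw k x y :=
  div_pos (pow_pos hy.1 _) (pow_pos (denom_pos hx0 hx1 (Ioo_subset_Icc_self hy)) _)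

lemma Lw_mono (hx0 : 0 < x) (hx1 : x < 1) {y z : ℝ} (hy : y ∈ Icc (0:ℝ) 1)
    (hz : z ∈ Icc (0:ℝ) 1) (hyz : y ≤ z) : Lw x y ≤ Lw x z := by
  have h1 := denom_pos hx0 hx1 hy
  have h2 := denom_pos hx0 hx1 hz
  have : Real.log (1 - x * z) ≤ Real.log (1 - x * y) :=
    Real.log_le_log h2 (by nlinarith)
  simp only [Lw]; linarith

lemma Lw_strictMono (hx0 : 0 < x) (hx1 : x < 1) {y z : ℝ} (hy : y ∈ Icc (0:ℝ) 1)
    (hz : z ∈ Icc (0:ℝ) 1) (hyz : y < z) : Lw x y < Lw x z := by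
  have h1 := denom_pos hx0 hx1 hy
  have h2 := denom_pos hx0 hx1 hz
  have : Real.log (1 - x * z) < Real.log (1 - x * y) :=
    Real.log_lt_log h2 (by nlinarith)
  simp only [Lw]; linarith

lemma hw_mono (hx0 : 0 < x) (hx1 : x < 1) {y z : ℝ} (hy : y ∈ Icc (0:ℝ) 1)
    (hz : z ∈ Icc (0:ℝ) 1) (hyz : y ≤ z) : hw x y ≤ hw x z := by
  have h1 := denom_pos hx0 hx1 hy
  have h2 := denom_pos hx0 hx1 hz
  rw [hw, hw, div_le_div_iff₀ h1 h2]
  nlinarith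

lemma hw_strictMono (hx0 : 0 < x) (hx1 : x < 1) {y z : ℝ} (hy : y ∈ Icc (0:ℝ) 1)
    (hz : z ∈ Icc (0:ℝ) 1) (hyz : y < z) : hw x y < hw x z := by
  have h1 := denom_pos hx0 hx1 hy
  have h2 := denom_pos hx0 hx1 hz
  rw [hw, hw, div_lt_div_iff₀ h1 h2]
  nlinarith

/-- the correlation integrand -/
noncomputable def FF (k : ℕ) (x y z : ℝ) : ℝ :=
  fw k x y * fw k x z * (Lw x z - Lw x y) * (hw x z - hw x y)

lemma FF_cont (hx0 : 0 < x) (hx1 : x < 1) (k : ℕ) {z : ℝ} (hz : z ∈ Icc (0:ℝ) 1) :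
    ContinuousOn (fun y => FF k x y z) (Icc 0 1) := by
  simp only [FF]
  exact (((fw_cont hx0 hx1 k).mul continuousOn_const).mul
    (continuousOn_const.sub (Lw_cont hx0 hx1))).mul
    (continuousOn_const.sub (hw_cont hx0 hx1))

lemma FF_nonneg (hx0 : 0 < x) (hx1 : x < 1) (k : ℕ) {y z : ℝ}
    (hy : y ∈ Icc (0:ℝ) 1) (hz : z ∈ Icc (0:ℝ) 1) : 0 ≤ FF k x y z := by
  have hfy := fw_nonneg hx0 hx1 k hy
  have hfz := fw_nonneg hx0 hx1 k hz
  rcases le_total y z with hyz | hyz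
  · have h1 := Lw_mono hx0 hx1 hy hz hyz
    have h2 := hw_mono hx0 hx1 hy hz hyz
    have : 0 ≤ (Lw x z - Lw x y) * (hw x z - hw x y) :=
      mul_nonneg (by linarith) (by linarith)
    simp only [FF]; nlinarith [mul_nonneg hfy hfz]
  · have h1 := Lw_mono hx0 hx1 hz hy hyz
    have h2 := hw_mono hx0 hx1 hz hy hyz
    have : 0 ≤ (Lw x z - Lw x y) * (hw x z - hw x y) :=
      mul_nonneg_of_nonpos_of_nonpos (by linarith) (by linarith)
    simp only [FF]; nlinarith [mul_nonneg hfy hfz]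

lemma FF_pos (hx0 : 0 < x) (hx1 : x < 1) (k : ℕ) {y z : ℝ}
    (hy : y ∈ Ioo (0:ℝ) 1) (hz : z ∈ Ioo (0:ℝ) 1) (hyz : y < z) : 0 < FF k x y z := by
  have hy' := Ioo_subset_Icc_self hy
  have hz' := Ioo_subset_Icc_self hz
  have hfy := fw_pos hx0 hx1 k hy
  have hfz := fw_pos hx0 hx1 k hz
  have h1 := Lw_strictMono hx0 hx1 hy' hz' hyz
  have h2 := hw_strictMono hx0 hx1 hy' hz' hyz
  simp only [FF]
  have := mul_pos (mul_pos hfy hfz) (mul_pos (sub_pos.mpr h1) (sub_pos.mpr h2))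
  nlinarith [this]

end QPratioAux

namespace QPratioAux

lemma inner_eq (hx0 : 0 < x) (hx1 : x < 1) (k : ℕ) (z : ℝ) :
    ∫ y in (0:ℝ)..1, FF k x y z
      = (fw k x z * Lw x z * hw x z) * (∫ y in (0:ℝ)..1, fw k x y)
        - (fw k x z * Lw x z) * (∫ y in (0:ℝ)..1, fw k x y * hw x y)
        - (fw k x z * hw x z) * (∫ y in (0:ℝ)..1, fw k x y * Lw x y)
        + fw k x z * (∫ y in (0:ℝ)..1, fw k x y * Lw x y * hw x y) := by
  have h01 : (0:ℝ) ∈ Icc (0:ℝ) 1 := by norm_num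
  have h11 : (1:ℝ) ∈ Icc (0:ℝ) 1 := by norm_num
  have hA : IntervalIntegrable (fun y => fw k x y) volume 0 1 :=
    integ_of_cont (fw_cont hx0 hx1 k) h01 h11
  have hB : IntervalIntegrable (fun y => fw k x y * hw x y) volume 0 1 :=
    integ_of_cont ((fw_cont hx0 hx1 k).mul (hw_cont hx0 hx1)) h01 h11
  have hC : IntervalIntegrable (fun y => fw k x y * Lw x y) volume 0 1 :=
    integ_of_cont ((fw_cont hx0 hx1 k).mul (Lw_cont hx0 hx1)) h01 h11
  have hD : IntervalIntegrable (fun y => fw k x y * Lw x y * hw x y) volume 0 1 :=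
    integ_of_cont (((fw_cont hx0 hx1 k).mul (Lw_cont hx0 hx1)).mul (hw_cont hx0 hx1)) h01 h11
  have key : ∀ y ∈ Set.uIcc (0:ℝ) 1, FF k x y z
      = (fw k x z * Lw x z * hw x z) * fw k x y
        - (fw k x z * Lw x z) * (fw k x y * hw x y)
        - (fw k x z * hw x z) * (fw k x y * Lw x y)
        + fw k x z * (fw k x y * Lw x y * hw x y) := by
    intro y _
    simp only [FF]; ring
  rw [integral_congr key, integral_add (((hA.const_mul _).sub (hB.const_mul _)).sub
      (hC.const_mul _)) (hD.const_mul _),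
    integral_sub ((hA.const_mul _).sub (hB.const_mul _)) (hC.const_mul _),
    integral_sub (hA.const_mul _) (hB.const_mul _),
    intervalIntegral.integral_const_mul, intervalIntegral.integral_const_mul,
    intervalIntegral.integral_const_mul, intervalIntegral.integral_const_mul]

lemma double_eq (hx0 : 0 < x) (hx1 : x < 1) (k : ℕ) :
    (∫ z in (0:ℝ)..1, ∫ y in (0:ℝ)..1, FF k x y z)
      = 2 * ((∫ y in (0:ℝ)..1, fw k x y)
              * (∫ y in (0:ℝ)..1, fw k x y * Lw x y * hw x y)
            - (∫ y in (0:ℝ)..1, fw k x y * hw x y)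
              * (∫ y in (0:ℝ)..1, fw k x y * Lw x y)) := by
  have h01 : (0:ℝ) ∈ Icc (0:ℝ) 1 := by norm_num
  have h11 : (1:ℝ) ∈ Icc (0:ℝ) 1 := by norm_num
  set A := ∫ y in (0:ℝ)..1, fw k x y with hAdef
  set B := ∫ y in (0:ℝ)..1, fw k x y * hw x y with hBdef
  set C := ∫ y in (0:ℝ)..1, fw k x y * Lw x y with hCdef
  set D := ∫ y in (0:ℝ)..1, fw k x y * Lw x y * hw x y with hDdef
  have hA : IntervalIntegrable (fun y => fw k x y) volume 0 1 :=
    integ_of_cont (fw_cont hx0 hx1 k) h01 h11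
  have hB : IntervalIntegrable (fun y => fw k x y * hw x y) volume 0 1 :=
    integ_of_cont ((fw_cont hx0 hx1 k).mul (hw_cont hx0 hx1)) h01 h11
  have hC : IntervalIntegrable (fun y => fw k x y * Lw x y) volume 0 1 :=
    integ_of_cont ((fw_cont hx0 hx1 k).mul (Lw_cont hx0 hx1)) h01 h11
  have hD : IntervalIntegrable (fun y => fw k x y * Lw x y * hw x y) volume 0 1 :=
    integ_of_cont (((fw_cont hx0 hx1 k).mul (Lw_cont hx0 hx1)).mul (hw_cont hx0 hx1)) h01 h11
  have key : ∀ z ∈ Set.uIcc (0:ℝ) 1, (∫ y in (0:ℝ)..1, FF k x y z)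
      = A * (fw k x z * Lw x z * hw x z)
        - B * (fw k x z * Lw x z) - C * (fw k x z * hw x z) + D * fw k x z := by
    intro z _
    rw [inner_eq hx0 hx1 k z]
    ring
  rw [integral_congr key,
    integral_add (((hD.const_mul A).sub (hC.const_mul B)).sub (hB.const_mul C))
      (hA.const_mul D),
    integral_sub ((hD.const_mul A).sub (hC.const_mul B)) (hB.const_mul C),
    integral_sub (hD.const_mul A) (hC.const_mul B),
    intervalIntegral.integral_const_mul, intervalIntegral.integral_const_mul,
    intervalIntegral.integral_const_mul, intervalIntegral.integral_const_mul]
  ring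

end QPratioAux

namespace QPratioAux

lemma double_pos (hx0 : 0 < x) (hx1 : x < 1) (k : ℕ) :
    0 < ∫ z in (0:ℝ)..1, ∫ y in (0:ℝ)..1, FF k x y z := by
  have h01 : (0:ℝ) ∈ Icc (0:ℝ) 1 := by norm_num
  have h11 : (1:ℝ) ∈ Icc (0:ℝ) 1 := by norm_num
  have hfun : (fun z => ∫ y in (0:ℝ)..1, FF k x y z)
      = fun z => (fw k x z * Lw x z * hw x z) * (∫ y in (0:ℝ)..1, fw k x y)
        - (fw k x z * Lw x z) * (∫ y in (0:ℝ)..1, fw k x y * hw x y)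
        - (fw k x z * hw x z) * (∫ y in (0:ℝ)..1, fw k x y * Lw x y)
        + fw k x z * (∫ y in (0:ℝ)..1, fw k x y * Lw x y * hw x y) :=
    funext fun z => inner_eq hx0 hx1 k z
  rw [hfun]
  apply intervalIntegral_pos_of_pos_on
  · apply integ_of_cont _ h01 h11
    apply ContinuousOn.add
    · apply ContinuousOn.sub
      · apply ContinuousOn.sub
        · exact (((fw_cont hx0 hx1 k).mul (Lw_cont hx0 hx1)).mul
            (hw_cont hx0 hx1)).mul continuousOn_const
        · exact ((fw_cont hx0 hx1 k).mul (Lw_cont hx0 hx1)).mul continuousOn_const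
      · exact ((fw_cont hx0 hx1 k).mul (hw_cont hx0 hx1)).mul continuousOn_const
    · exact (fw_cont hx0 hx1 k).mul continuousOn_const
  · intro z hz
    rw [← inner_eq hx0 hx1 k z]
    have hz' : z ∈ Icc (0:ℝ) 1 := Ioo_subset_Icc_self hz
    have hi1 : IntervalIntegrable (fun y => FF k x y z) volume 0 z :=
      integ_of_cont (FF_cont hx0 hx1 k hz') h01 hz'
    have hi2 : IntervalIntegrable (fun y => FF k x y z) volume z 1 :=
      integ_of_cont (FF_cont hx0 hx1 k hz') hz' h11
    rw [← integral_add_adjacent_intervals hi1 hi2]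
    have p1 : 0 < ∫ y in (0:ℝ)..z, FF k x y z := by
      apply intervalIntegral_pos_of_pos_on hi1 _ hz.1
      intro y hy
      exact FF_pos hx0 hx1 k ⟨hy.1, lt_trans hy.2 hz.2⟩ hz hy.2
    have p2 : 0 ≤ ∫ y in z..(1:ℝ), FF k x y z := by
      apply intervalIntegral.integral_nonneg hz.2.le
      intro u hu
      exact FF_nonneg hx0 hx1 k ⟨le_trans hz.1.le hu.1, hu.2⟩ hz'
    linarith
  · norm_num

end QPratioAux

end QPaux


/-- Euler-integral form `P_k(x) = k ∫₀¹ y^{k-1}/(1-xy)^k dy`. -/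
noncomputable def Pint (k : ℕ) (x : ℝ) : ℝ :=
  k * ∫ y in (0:ℝ)..1, y ^ (k - 1) / (1 - x * y) ^ k

/-- Euler-integral form `Q_k(x) = k ∫₀¹ y^{k-1} |log(1-xy)|/(1-xy)^k dy`. -/
noncomputable def Qint (k : ℕ) (x : ℝ) : ℝ :=
  k * ∫ y in (0:ℝ)..1, y ^ (k - 1) * |Real.log (1 - x * y)| / (1 - x * y) ^ k

/-- for `k ≥ 1` and `x ∈ (0,1)`,
`Q_k(x) P_{k+1}(x) − Q_{k+1}(x) P_k(x) < 0`; equivalently `Q_k/P_k` is strictly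
increasing in `k`. -/
theorem QP_ratio_increasing (k : ℕ) (hk : 1 ≤ k) (x : ℝ) (hx0 : 0 < x) (hx1 : x < 1) :
    Qint k x * Pint (k + 1) x - Qint (k + 1) x * Pint k x < 0 := by
  open QPratioAux Set in
  obtain ⟨m, rfl⟩ : ∃ m, k = m + 1 := ⟨k - 1, (Nat.succ_pred_eq_of_pos hk).symm⟩
  set k := m + 1 with hkdef
  have habs : ∀ y ∈ Icc (0:ℝ) 1, |Real.log (1 - x * y)| = Lw x y := by
    intro y hy
    have hd := denom_pos hx0 hx1 hy
    have hlog : Real.log (1 - x * y) ≤ 0 :=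
      Real.log_nonpos (by linarith) (by nlinarith [hy.1, hx0.le])
    rw [abs_of_nonpos hlog]; rfl
  have eP1 : Pint k x = k * ∫ y in (0:ℝ)..1, fw k x y := rfl
  have eQ1 : Qint k x = k * ∫ y in (0:ℝ)..1, fw k x y * Lw x y := by
    unfold Qint
    congr 1
    apply intervalIntegral.integral_congr
    intro y hy
    rw [Set.uIcc_of_le (by norm_num : (0:ℝ) ≤ 1)] at hy
    dsimp only
    rw [habs y hy]
    simp only [fw, Lw]
    ring
  have eP2 : Pint (k + 1) x = (k + 1 : ℕ) * ∫ y in (0:ℝ)..1, fw k x y * hw x y := by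
    unfold Pint
    congr 1
    apply intervalIntegral.integral_congr
    intro y hy
    rw [Set.uIcc_of_le (by norm_num : (0:ℝ) ≤ 1)] at hy
    dsimp only
    simp only [fw, hw, hkdef, Nat.add_sub_cancel]
    rw [div_mul_div_comm, ← pow_succ, ← pow_succ]
  have eQ2 : Qint (k + 1) x = (k + 1 : ℕ) * ∫ y in (0:ℝ)..1, fw k x y * Lw x y * hw x y := by
    unfold Qint
    congr 1
    apply intervalIntegral.integral_congr
    intro y hy
    rw [Set.uIcc_of_le (by norm_num : (0:ℝ) ≤ 1)] at hy
    have hd := (denom_pos hx0 hx1 hy).ne'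
    dsimp only
    rw [habs y hy]
    simp only [fw, Lw, hw, hkdef, Nat.add_sub_cancel]
    field_simp
    ring
  have hBC : (∫ y in (0:ℝ)..1, fw k x y * hw x y) * (∫ y in (0:ℝ)..1, fw k x y * Lw x y)
      < (∫ y in (0:ℝ)..1, fw k x y) * (∫ y in (0:ℝ)..1, fw k x y * Lw x y * hw x y) := by
    have h2 := double_eq hx0 hx1 k
    have h3 := double_pos hx0 hx1 k
    rw [h2] at h3
    linarith
  rw [eQ1, eP2, eQ2, eP1]
  have hkpos : (0:ℝ) < (k : ℝ) := by positivity
  have hk1pos : (0:ℝ) < ((k + 1 : ℕ) : ℝ) := by positivity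
  nlinarith [mul_pos (mul_pos hkpos hk1pos) (sub_pos.mpr hBC)]
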